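/- arXiv:1708.00030 — 3 statements merged into one kernel-verified Lean document; each statement's English description precedes it below -/
import Mathlib

section
/- For any real c > 0, real δ ∈ [0,1), and real ℓ ≥ 1, the integral ∫_0^{1/(4c)} (sin(πc(1−δ)v)/(πv)) · (1−v)^{ℓ²} dv is at least (2√2 c(1−δ)/(π(ℓ²+1))) · (1 − (1 − 1/(4c))^{ℓ²+1}), provided 1/(4c) ≤ 1. -/
open Real MeasureTheory intervalIntegral Set

lemma sin_lb {x : ℝ} (hx : 0 ≤ x) (hx' : x ≤ π / 4) :
    2 * Real.sqrt 2 / π * x ≤ Real.sin x := by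
  have hπ := Real.pi_pos
  have hb0 : 0 ≤ x / (π / 4) := by positivity
  have hb1 : x / (π / 4) ≤ 1 := by
    rw [div_le_one (by positivity)]; exact hx'
  have hmem0 : (0:ℝ) ∈ Icc (0:ℝ) π := by constructor <;> linarith
  have hmem1 : π / 4 ∈ Icc (0:ℝ) π := by constructor <;> linarith
  have key := strictConcaveOn_sin_Icc.concaveOn.2 hmem0 hmem1
    (show (0:ℝ) ≤ 1 - x / (π / 4) by linarith) hb0 (by ring)
  simp only [smul_eq_mul, mul_zero, Real.sin_zero, zero_add] at key
  have hx4 : x / (π / 4) * (π / 4) = x := by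
    field_simp
  rw [hx4] at key
  calc 2 * Real.sqrt 2 / π * x = x / (π / 4) * Real.sin (π / 4) := by
        rw [Real.sin_pi_div_four]
        field_simp
        ring
    _ ≤ Real.sin x := key

theorem integral_I1a_lower (c δ ℓ : ℝ) (hc : 0 < c) (hδ0 : 0 ≤ δ) (hδ1 : δ < 1)
    (hℓ : 1 ≤ ℓ) (hc1 : 1 / (4 * c) ≤ 1) :
    ∫ v in (0 : ℝ)..(1 / (4 * c)),
        Real.sin (Real.pi * c * (1 - δ) * v) / (Real.pi * v) * (1 - v) ^ (ℓ ^ 2)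
      ≥ 2 * Real.sqrt 2 * c * (1 - δ) / (Real.pi * (ℓ ^ 2 + 1)) *
          (1 - (1 - 1 / (4 * c)) ^ (ℓ ^ 2 + 1)) := by
  have hπ := Real.pi_pos
  set T : ℝ := 1 / (4 * c) with hT
  have hT0 : 0 < T := by positivity
  set p : ℝ := ℓ ^ 2 with hp
  have hp1 : 1 ≤ p := by nlinarith
  set a : ℝ := π * c * (1 - δ) with ha
  have ha0 : 0 < a := by
    have : 0 < 1 - δ := by linarith
    positivity
  set K : ℝ := 2 * Real.sqrt 2 * c * (1 - δ) / π with hK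
  have hK0 : 0 < K := by
    have h2 : 0 < Real.sqrt 2 := by positivity
    have : 0 < 1 - δ := by linarith
    positivity
  have hrpowcont : Continuous fun v : ℝ => (1 - v) ^ p :=
    (continuous_const.sub continuous_id).rpow_const (fun x => Or.inr (by linarith))
  have hmono : ∫ v in (0:ℝ)..T, Real.sin (a * v) / (π * v) * (1 - v) ^ p
      ≥ ∫ v in (0:ℝ)..T, K * (1 - v) ^ p := by
    rw [intervalIntegral.integral_of_le hT0.le, intervalIntegral.integral_of_le hT0.le]
    apply setIntegral_mono_on
    · exact (continuous_const.mul hrpowcont).integrableOn_Ioc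
    · apply Measure.integrableOn_of_bounded (M := a / π) measure_Ioc_lt_top.ne
      · apply Measurable.aestronglyMeasurable
        exact ((Real.measurable_sin.comp (measurable_const.mul measurable_id)).div
          (measurable_const.mul measurable_id)).mul hrpowcont.measurable
      · filter_upwards [ae_restrict_mem measurableSet_Ioc] with v hv
        have hv0 : 0 < v := hv.1
        have hv1 : v ≤ T := hv.2
        have h1v : 0 ≤ 1 - v := by
          have := hv1.trans hc1; linarith
        rw [norm_mul, norm_div]
        have hb1 : ‖(1 - v) ^ p‖ ≤ 1 := by
          rw [Real.norm_eq_abs, abs_of_nonneg (Real.rpow_nonneg h1v _)]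
          exact Real.rpow_le_one h1v (by linarith) (by linarith)
        have hb2 : ‖Real.sin (a * v)‖ / ‖π * v‖ ≤ a / π := by
          rw [Real.norm_eq_abs, Real.norm_eq_abs,
            abs_of_pos (show (0:ℝ) < π * v by positivity)]
          rw [div_le_div_iff₀ (by positivity) hπ]
          have h1 : |Real.sin (a * v)| ≤ a * v := by
            exact Real.abs_sin_le_abs.trans_eq (abs_of_pos (mul_pos ha0 hv0))
          nlinarith [mul_le_mul_of_nonneg_right h1 hπ.le]
        calc ‖Real.sin (a * v)‖ / ‖π * v‖ * ‖(1 - v) ^ p‖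
            ≤ (a / π) * 1 :=
              mul_le_mul hb2 hb1 (norm_nonneg _) (by positivity)
          _ = a / π := mul_one _
    · exact measurableSet_Ioc
    · intro v hv
      have hv0 : 0 < v := hv.1
      have hv1 : v ≤ T := hv.2
      have h1v : 0 ≤ 1 - v := by
        have := hv1.trans hc1; linarith
      have hx : a * v ≤ π / 4 := by
        have h3 : a * v ≤ a * T := by nlinarith
        have haT : a * T = π * (1 - δ) / 4 := by
          rw [ha, hT]; field_simp
        rw [haT] at h3
        nlinarith
      have hsin := sin_lb (by positivity) hx
      have hKle : K ≤ Real.sin (a * v) / (π * v) := by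
        rw [le_div_iff₀ (by positivity)]
        calc K * (π * v) = 2 * Real.sqrt 2 / π * (a * v) := by
              rw [hK, ha]; field_simp
          _ ≤ Real.sin (a * v) := hsin
      exact mul_le_mul_of_nonneg_right hKle (Real.rpow_nonneg h1v _)
  have hcomp : ∫ v in (0:ℝ)..T, K * (1 - v) ^ p
      = K * ((1 - (1 - T) ^ (p + 1)) / (p + 1)) := by
    rw [intervalIntegral.integral_const_mul]
    have h1 : ∫ v in (0:ℝ)..T, (1 - v) ^ p = ∫ u in (1 - T)..(1:ℝ), u ^ p := by
      have := intervalIntegral.integral_comp_sub_left (a := (0:ℝ)) (b := T)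
        (fun u => u ^ p) 1
      simpa using this
    rw [h1, integral_rpow (Or.inl (by linarith))]
    rw [Real.one_rpow]
  have hfinal : K * ((1 - (1 - T) ^ (p + 1)) / (p + 1))
      = 2 * Real.sqrt 2 * c * (1 - δ) / (π * (p + 1)) * (1 - (1 - T) ^ (p + 1)) := by
    rw [hK]
    have hp0 : (0:ℝ) < p + 1 := by linarith
    field_simp
    try ring
  calc ∫ v in (0:ℝ)..T, Real.sin (a * v) / (π * v) * (1 - v) ^ p
      ≥ ∫ v in (0:ℝ)..T, K * (1 - v) ^ p := hmono
    _ = _ := by rw [hcomp, hfinal]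
end

section
/- For any real c ≥ 1 and real ℓ ≥ 1, the absolute value of ∫_{1/c}^{1} (sin(πc v)/(πv)) · (1−v)^{ℓ²} dv is at most (1/π) ∫_{ℓ²/c}^{∞} e^{−u}/u du. -/
open Real MeasureTheory Set intervalIntegral

theorem integral_I2_bound (c ℓ : ℝ) (hc : 1 ≤ c) (hℓ : 1 ≤ ℓ) :
    |∫ v in (1 / c)..(1 : ℝ),
        Real.sin (Real.pi * c * v) / (Real.pi * v) * (1 - v) ^ (ℓ ^ 2)|
      ≤ 1 / Real.pi * ∫ u in Set.Ioi (ℓ ^ 2 / c), Real.exp (-u) / u := by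
  have hπ := Real.pi_pos
  have hc0 : (0:ℝ) < c := lt_of_lt_of_le one_pos hc
  set k := ℓ ^ 2 with hk
  have hk1 : (1:ℝ) ≤ k := by nlinarith
  have hk0 : (0:ℝ) < k := lt_of_lt_of_le one_pos hk1
  have ha0 : (0:ℝ) < 1 / c := by positivity
  have ha1 : 1 / c ≤ 1 := by rw [div_le_one hc0]; exact hc
  have hkc0 : (0:ℝ) < k / c := by positivity
  -- integrability of the exponential integrand on Ioi (k / c)
  have hmeas : AEStronglyMeasurable (fun u : ℝ => Real.exp (-u) / u)
      (volume.restrict (Set.Ioi (k / c))) :=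
    ((Real.measurable_exp.comp measurable_neg).div measurable_id).aestronglyMeasurable
  have hIoi : IntegrableOn (fun u : ℝ => Real.exp (-u) / u) (Set.Ioi (k / c)) := by
    have hint : IntegrableOn (fun u : ℝ => (c / k) * Real.exp (-u)) (Set.Ioi (k / c)) := by
      have h := (exp_neg_integrableOn_Ioi (k / c) (one_pos)).const_mul (c / k)
      simpa [IntegrableOn] using h
    refine hint.mono' hmeas ?_
    filter_upwards [ae_restrict_mem measurableSet_Ioi] with u hu
    have hu0 : 0 < u := lt_trans hkc0 hu
    have h1 : 1 / u ≤ c / k := by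
      have := one_div_le_one_div_of_le hkc0 hu.le
      rwa [one_div_div] at this
    rw [Real.norm_eq_abs, abs_div, abs_of_pos (Real.exp_pos _), abs_of_pos hu0]
    calc Real.exp (-u) / u = Real.exp (-u) * (1 / u) := by ring
      _ ≤ Real.exp (-u) * (c / k) :=
        mul_le_mul_of_nonneg_left h1 (Real.exp_pos _).le
      _ = c / k * Real.exp (-u) := by ring
  -- continuity facts
  have hcont_f : ContinuousOn
      (fun v : ℝ => Real.sin (Real.pi * c * v) / (Real.pi * v) * (1 - v) ^ k)
      (Set.Icc (1 / c) 1) := by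
    apply ContinuousOn.mul
    · apply ContinuousOn.div
      · exact (Real.continuous_sin.comp (continuous_const.mul continuous_id)).continuousOn
      · exact (continuous_const.mul continuous_id).continuousOn
      · intro v hv
        have : 0 < v := lt_of_lt_of_le ha0 hv.1
        positivity
    · exact ((continuous_const.sub continuous_id).rpow_const
        (fun x => Or.inr hk0.le)).continuousOn
  have hcont_g : ContinuousOn
      (fun v : ℝ => Real.exp (-(k * v)) / (Real.pi * v)) (Set.Icc (1 / c) 1) := by
    apply ContinuousOn.div
    · exact (Real.continuous_exp.comp (continuous_const.mul continuous_id).neg).continuousOn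
    · exact (continuous_const.mul continuous_id).continuousOn
    · intro v hv
      have : 0 < v := lt_of_lt_of_le ha0 hv.1
      positivity
  -- pointwise bound
  have hle : ∀ v ∈ Set.Icc (1 / c) 1,
      |Real.sin (Real.pi * c * v) / (Real.pi * v) * (1 - v) ^ k|
        ≤ Real.exp (-(k * v)) / (Real.pi * v) := by
    intro v hv
    have hv0 : 0 < v := lt_of_lt_of_le ha0 hv.1
    have hv1 : v ≤ 1 := hv.2
    have h1v : 0 ≤ 1 - v := by linarith
    have hrpow0 : (0:ℝ) ≤ (1 - v) ^ k := Real.rpow_nonneg h1v k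
    have hsin : |Real.sin (Real.pi * c * v)| ≤ 1 := Real.abs_sin_le_one _
    have hbase : 1 - v ≤ Real.exp (-v) := by
      have := Real.add_one_le_exp (-v)
      linarith
    have hrpow : (1 - v) ^ k ≤ Real.exp (-(k * v)) := by
      calc (1 - v) ^ k ≤ (Real.exp (-v)) ^ k :=
            Real.rpow_le_rpow h1v hbase hk0.le
        _ = Real.exp (-(k * v)) := by
            rw [← Real.exp_mul]; ring_nf
    rw [abs_mul, abs_div, abs_of_nonneg hrpow0, abs_of_pos (by positivity : 0 < Real.pi * v)]
    calc |Real.sin (Real.pi * c * v)| / (Real.pi * v) * (1 - v) ^ k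
        ≤ 1 / (Real.pi * v) * Real.exp (-(k * v)) := by
          apply mul_le_mul
          · exact div_le_div_of_nonneg_right hsin (by positivity) |>.trans_eq rfl
          · exact hrpow
          · exact hrpow0
          · positivity
      _ = Real.exp (-(k * v)) / (Real.pi * v) := by ring
  -- step 1: abs into integral + monotone comparison
  have step1 : |∫ v in (1 / c)..(1:ℝ),
      Real.sin (Real.pi * c * v) / (Real.pi * v) * (1 - v) ^ k|
      ≤ ∫ v in (1 / c)..(1:ℝ), Real.exp (-(k * v)) / (Real.pi * v) := by
    refine (intervalIntegral.abs_integral_le_integral_abs ha1).trans ?_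
    apply intervalIntegral.integral_mono_on ha1
    · exact (hcont_f.abs).intervalIntegrable_of_Icc ha1
    · exact hcont_g.intervalIntegrable_of_Icc ha1
    · exact hle
  -- step 2: substitution u = k * v
  have step2 : ∫ v in (1 / c)..(1:ℝ), Real.exp (-(k * v)) / (Real.pi * v)
      = 1 / Real.pi * ∫ u in (k / c)..k, Real.exp (-u) / u := by
    have hsub : (k • ∫ v in (1 / c)..(1:ℝ), Real.exp (-(k * v)) / (k * v))
        = ∫ u in (k * (1 / c))..(k * 1), Real.exp (-u) / u :=
      intervalIntegral.smul_integral_comp_mul_left (fun u => Real.exp (-u) / u) k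
    have hrw : ∀ v : ℝ, Real.exp (-(k * v)) / (Real.pi * v)
        = 1 / Real.pi * (k * (Real.exp (-(k * v)) / (k * v))) := by
      intro v
      rcases eq_or_ne v 0 with rfl | hv
      · simp
      · field_simp
    calc ∫ v in (1 / c)..(1:ℝ), Real.exp (-(k * v)) / (Real.pi * v)
        = ∫ v in (1 / c)..(1:ℝ), 1 / Real.pi * (k * (Real.exp (-(k * v)) / (k * v))) := by
          apply intervalIntegral.integral_congr; intro v _; exact hrw v
      _ = 1 / Real.pi * (k • ∫ v in (1 / c)..(1:ℝ), Real.exp (-(k * v)) / (k * v)) := by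
          rw [intervalIntegral.integral_const_mul, intervalIntegral.integral_const_mul]
          simp [smul_eq_mul]
      _ = 1 / Real.pi * ∫ u in (k / c)..k, Real.exp (-u) / u := by
          rw [hsub, mul_one_div, mul_one]
  -- step 3: extend interval to Ioi
  have step3 : ∫ u in (k / c)..k, Real.exp (-u) / u
      ≤ ∫ u in Set.Ioi (k / c), Real.exp (-u) / u := by
    have hkck : k / c ≤ k := by
      rw [div_le_iff₀ hc0]; nlinarith
    rw [intervalIntegral.integral_of_le hkck]
    apply MeasureTheory.setIntegral_mono_set hIoi
    · filter_upwards [ae_restrict_mem measurableSet_Ioi] with u hu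
      have hu0 : 0 < u := lt_trans hkc0 hu
      positivity
    · exact (Set.Ioc_subset_Ioi_self).eventuallyLE
  calc |∫ v in (1 / c)..(1:ℝ),
      Real.sin (Real.pi * c * v) / (Real.pi * v) * (1 - v) ^ k|
      ≤ ∫ v in (1 / c)..(1:ℝ), Real.exp (-(k * v)) / (Real.pi * v) := step1
    _ = 1 / Real.pi * ∫ u in (k / c)..k, Real.exp (-u) / u := step2
    _ ≤ 1 / Real.pi * ∫ u in Set.Ioi (k / c), Real.exp (-u) / u :=
        mul_le_mul_of_nonneg_left step3 (by positivity)
end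

section
/- For c ≥ 1, δ ∈ [0,1), and ℓ ≥ 1, the quantity h(c) := c − 2ℓ ∫_0^1 (sin(πc(1−δ)v)/(πv))(1−v)^{ℓ²} dv satisfies h(c) ≤ c − 2ℓ[ (2c(1−δ)/(π(ℓ²+1)))(√2 − (2√2−2)e^{−(ℓ²+1)/(4c)} − (2−√2)e^{−(ℓ²+1)/(2c)}) − (1/π)∫_{ℓ²/c}^∞ e^{−u}/u du ]. -/
open Real MeasureTheory Set intervalIntegral

lemma sin_quarter_bound {x : ℝ} (h0 : 0 ≤ x) (h : x ≤ π / 4) :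
    2 * Real.sqrt 2 / π * x ≤ Real.sin x := by
  have hπ := Real.pi_pos
  have h4 : (0:ℝ) < π / 4 := by linarith
  set t : ℝ := x / (π / 4) with ht
  have ht0 : 0 ≤ t := by positivity
  have ht1 : t ≤ 1 := by rw [ht, div_le_one h4]; exact h
  have hconc := strictConcaveOn_sin_Icc.concaveOn
  have m0 : (0:ℝ) ∈ Icc (0:ℝ) π := ⟨le_rfl, hπ.le⟩
  have m4 : π / 4 ∈ Icc (0:ℝ) π := ⟨h4.le, by linarith⟩
  have key := hconc.2 m0 m4 (show (0:ℝ) ≤ 1 - t by linarith) ht0 (show 1 - t + t = 1 by ring)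
  have hx : (1 - t) • (0:ℝ) + t • (π / 4) = x := by
    rw [smul_eq_mul, smul_eq_mul, ht]; field_simp; ring
  rw [hx, smul_eq_mul, smul_eq_mul, Real.sin_zero, Real.sin_pi_div_four, mul_zero, zero_add] at key
  calc 2 * Real.sqrt 2 / π * x = t * (Real.sqrt 2 / 2) := by
        rw [ht]; field_simp; try ring
    _ ≤ Real.sin x := key

set_option maxHeartbeats 1000000 in
theorem h_upper_bound (c δ ℓ : ℝ) (hc : 1 ≤ c) (hδ0 : 0 ≤ δ) (hδ1 : δ < 1)
    (hℓ : 1 ≤ ℓ) :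
    c - 2 * ℓ * ∫ v in (0 : ℝ)..1,
        Real.sin (Real.pi * c * (1 - δ) * v) / (Real.pi * v) * (1 - v) ^ (ℓ ^ 2)
      ≤ c - 2 * ℓ *
          (2 * c * (1 - δ) / (Real.pi * (ℓ ^ 2 + 1)) *
              (Real.sqrt 2 - (2 * Real.sqrt 2 - 2) * Real.exp (-(ℓ ^ 2 + 1) / (4 * c))
                - (2 - Real.sqrt 2) * Real.exp (-(ℓ ^ 2 + 1) / (2 * c)))
            - 1 / Real.pi * ∫ u in Set.Ioi (ℓ ^ 2 / c), Real.exp (-u) / u) := by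
  have hπ := Real.pi_pos
  have hc0 : (0:ℝ) < c := by linarith
  have hs2sq : Real.sqrt 2 ^ 2 = 2 := Real.sq_sqrt (by norm_num)
  have hs2nn : 0 ≤ Real.sqrt 2 := Real.sqrt_nonneg 2
  have hs2a : 1 ≤ Real.sqrt 2 := by nlinarith
  have hs2b : Real.sqrt 2 ≤ 2 := by nlinarith
  set L : ℝ := ℓ ^ 2 with hLdef
  have hL1 : 1 ≤ L := by rw [hLdef]; nlinarith
  have hL0 : (0:ℝ) < L := by linarith
  set k : ℝ := L + 1 with hkdef
  have hk0 : (0:ℝ) < k := by rw [hkdef]; linarith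
  set a : ℝ := c * (1 - δ) with hadef
  have ha0 : 0 < a := by rw [hadef]; nlinarith
  have hac : a ≤ c := by rw [hadef]; nlinarith
  set T1 : ℝ := 1 / (4 * c) with hT1
  set T2 : ℝ := 1 / (2 * c) with hT2
  set Tc : ℝ := 1 / c with hTc
  have hT1p : 0 < T1 := by rw [hT1]; positivity
  have hT12 : T1 ≤ T2 := by
    rw [hT1, hT2]; apply one_div_le_one_div_of_le (by linarith) (by linarith)
  have hT2c : T2 ≤ Tc := by
    rw [hT2, hTc]; apply one_div_le_one_div_of_le (by linarith) (by linarith)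
  have hTc1 : Tc ≤ 1 := by rw [hTc]; exact (div_le_one hc0).mpr hc
  set f : ℝ → ℝ :=
    fun v => Real.sin (Real.pi * c * (1 - δ) * v) / (Real.pi * v) * (1 - v) ^ L with hfdef
  -- measurability
  have hpc : Continuous fun v : ℝ => (1 - v) ^ L :=
    (continuous_const.sub continuous_id).rpow_const (fun x => Or.inr hL0.le)
  have hmeas : Measurable f := by
    apply Measurable.mul
    · exact (Real.measurable_sin.comp (measurable_const.mul measurable_id)).div
        (measurable_const.mul measurable_id)
    · exact hpc.measurable
  -- integrability of f on subintervals of [0,1]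
  have hIbnd : ∀ p q : ℝ, 0 ≤ p → p ≤ q → q ≤ 1 → IntervalIntegrable f volume p q := by
    intro p q hp hpq hq
    rw [intervalIntegrable_iff_integrableOn_Ioc_of_le hpq]
    apply Measure.integrableOn_of_bounded (M := a) measure_Ioc_lt_top.ne
      hmeas.aestronglyMeasurable
    rw [ae_restrict_iff' measurableSet_Ioc]
    refine ae_of_all _ (fun v hv => ?_)
    have hv0 : 0 < v := lt_of_le_of_lt hp hv.1
    have hv1 : v ≤ 1 := le_trans hv.2 hq
    have h2 : (0:ℝ) ≤ (1 - v) ^ L := Real.rpow_nonneg (by linarith) L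
    have h3 : (1 - v) ^ L ≤ 1 := Real.rpow_le_one (by linarith) (by linarith) hL0.le
    have h4 : (0:ℝ) < Real.pi * v := by positivity
    have h1 : |Real.sin (Real.pi * c * (1 - δ) * v)| ≤ Real.pi * c * (1 - δ) * v := by
      calc |Real.sin (Real.pi * c * (1 - δ) * v)| ≤ |Real.pi * c * (1 - δ) * v| :=
            Real.abs_sin_le_abs
        _ = Real.pi * c * (1 - δ) * v := abs_of_nonneg
            (mul_nonneg (mul_nonneg (mul_nonneg hπ.le hc0.le) (by linarith)) hv0.le)
    have h5 : |Real.sin (Real.pi * c * (1 - δ) * v)| / (Real.pi * v) ≤ a := by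
      rw [div_le_iff₀ h4]
      calc |Real.sin (Real.pi * c * (1 - δ) * v)| ≤ Real.pi * c * (1 - δ) * v := h1
        _ = a * (Real.pi * v) := by rw [hadef]; ring
    rw [hfdef]
    simp only [Real.norm_eq_abs]
    rw [abs_mul, abs_div, abs_of_nonneg h4.le, abs_of_nonneg h2]
    calc |Real.sin (Real.pi * c * (1 - δ) * v)| / (Real.pi * v) * (1 - v) ^ L
        ≤ a * 1 := mul_le_mul h5 h3 h2 ha0.le
      _ = a := mul_one a

  have hT11 : T1 ≤ 1 := le_trans (le_trans hT12 hT2c) hTc1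
  have hT21 : T2 ≤ 1 := le_trans hT2c hTc1
  have hTcpos : 0 < Tc := by rw [hTc]; positivity
  have hT2p : 0 < T2 := lt_of_lt_of_le hT1p hT12
  -- the antiderivative computation for (1-v)^L
  have hPint : ∀ s t : ℝ, 0 ≤ s → t ≤ 1 →
      (∫ v in s..t, (1 - v) ^ L) = ((1 - s) ^ k - (1 - t) ^ k) / k := by
    intro s t hs ht
    have h1 : (∫ v in s..t, (1 - v) ^ L) = ∫ x in (1 - t)..(1 - s), x ^ L := by
      simpa using intervalIntegral.integral_comp_sub_left (fun u : ℝ => u ^ L) 1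
    rw [h1, integral_rpow (Or.inl (by linarith : (-1:ℝ) < L)), hkdef]
  -- key exponential comparisons
  have hcomp : ∀ T : ℝ, 0 ≤ T → T ≤ 1 → (1 - T) ^ k ≤ Real.exp (-T * k) := by
    intro T h0 h1
    have he : 1 - T ≤ Real.exp (-T) := by nlinarith [Real.add_one_le_exp (-T)]
    calc (1 - T) ^ k ≤ Real.exp (-T) ^ k :=
          Real.rpow_le_rpow (by linarith) he hk0.le
      _ = Real.exp (-T * k) := (Real.exp_mul _ _).symm
  have hA1E : (1 - T1) ^ k ≤ Real.exp (-k / (4 * c)) := by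
    have := hcomp T1 hT1p.le hT11
    have harg : -T1 * k = -k / (4 * c) := by rw [hT1]; field_simp
    rwa [harg] at this
  have hA2E : (1 - T2) ^ k ≤ Real.exp (-k / (2 * c)) := by
    have := hcomp T2 hT2p.le hT21
    have harg : -T2 * k = -k / (2 * c) := by rw [hT2]; field_simp
    rwa [harg] at this
  -- segment 1
  have hseg1 : 2 * Real.sqrt 2 * a / π * ((1 - (1 - T1) ^ k) / k) ≤ ∫ v in (0:ℝ)..T1, f v := by
    have hpoint : ∀ v, v ∈ Ioc (0:ℝ) T1 →
        2 * Real.sqrt 2 * a / π * (1 - v) ^ L ≤ f v := by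
      intro v hv
      have hv0 : 0 < v := hv.1
      have hvT : v ≤ T1 := hv.2
      have hv1 : v ≤ 1 := le_trans hvT hT11
      have hπv : 0 < Real.pi * v := by positivity
      have hcv : c * v ≤ 1 / 4 := by
        calc c * v ≤ c * T1 := by nlinarith
          _ = 1 / 4 := by rw [hT1]; field_simp; try ring
      have hX0 : 0 ≤ Real.pi * c * (1 - δ) * v :=
        mul_nonneg (mul_nonneg (mul_nonneg hπ.le hc0.le) (by linarith)) hv0.le
      have hX4 : Real.pi * c * (1 - δ) * v ≤ π / 4 := by
        calc Real.pi * c * (1 - δ) * v ≤ Real.pi * (c * v) := by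
              nlinarith [mul_nonneg (mul_nonneg (mul_nonneg hπ.le hc0.le) hv0.le) hδ0]
          _ ≤ Real.pi * (1 / 4) := mul_le_mul_of_nonneg_left hcv hπ.le
          _ = π / 4 := by ring
      have hsin := sin_quarter_bound hX0 hX4
      have hdiv : 2 * Real.sqrt 2 * a / π
          ≤ Real.sin (Real.pi * c * (1 - δ) * v) / (Real.pi * v) := by
        rw [le_div_iff₀ hπv]
        calc 2 * Real.sqrt 2 * a / π * (Real.pi * v)
            = 2 * Real.sqrt 2 / π * (Real.pi * c * (1 - δ) * v) := by
              rw [hadef]; field_simp; try ring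
          _ ≤ Real.sin (Real.pi * c * (1 - δ) * v) := hsin
      have := mul_le_mul_of_nonneg_right hdiv (Real.rpow_nonneg (by linarith : (0:ℝ) ≤ 1 - v) L)
      simpa [hfdef] using this
    have hmono : (fun v => 2 * Real.sqrt 2 * a / π * (1 - v) ^ L)
        ≤ᵐ[volume.restrict (Icc 0 T1)] f := by
      rw [← Measure.restrict_congr_set Ioc_ae_eq_Icc]
      exact (ae_restrict_iff' measurableSet_Ioc).2 (ae_of_all _ hpoint)
    have hg1int : IntervalIntegrable (fun v => 2 * Real.sqrt 2 * a / π * (1 - v) ^ L)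
        volume 0 T1 := (continuous_const.mul hpc).intervalIntegrable _ _
    have hle := intervalIntegral.integral_mono_ae_restrict hT1p.le hg1int
      (hIbnd 0 T1 le_rfl hT1p.le hT11) hmono
    rw [intervalIntegral.integral_const_mul, hPint 0 T1 le_rfl hT11] at hle
    simpa using hle
  -- segment 2
  have hseg2 : (4 - 2 * Real.sqrt 2) * a / π * (((1 - T1) ^ k - (1 - T2) ^ k) / k)
      ≤ ∫ v in T1..T2, f v := by
    have hpoint : ∀ v ∈ Icc T1 T2,
        (4 - 2 * Real.sqrt 2) * a / π * (1 - v) ^ L ≤ f v := by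
      intro v hv
      have hv0 : 0 < v := lt_of_lt_of_le hT1p hv.1
      have hvT : v ≤ T2 := hv.2
      have hv1 : v ≤ 1 := le_trans hvT hT21
      have hπv : 0 < Real.pi * v := by positivity
      have hcv : c * v ≤ 1 / 2 := by
        calc c * v ≤ c * T2 := by nlinarith
          _ = 1 / 2 := by rw [hT2]; field_simp; try ring
      have hX0 : 0 ≤ Real.pi * c * (1 - δ) * v :=
        mul_nonneg (mul_nonneg (mul_nonneg hπ.le hc0.le) (by linarith)) hv0.le
      have hX2 : Real.pi * c * (1 - δ) * v ≤ π / 2 := by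
        calc Real.pi * c * (1 - δ) * v ≤ Real.pi * (c * v) := by
              nlinarith [mul_nonneg (mul_nonneg (mul_nonneg hπ.le hc0.le) hv0.le) hδ0]
          _ ≤ Real.pi * (1 / 2) := mul_le_mul_of_nonneg_left hcv hπ.le
          _ = π / 2 := by ring
      have hsin := Real.mul_le_sin hX0 hX2
      have hdiv : (4 - 2 * Real.sqrt 2) * a / π
          ≤ Real.sin (Real.pi * c * (1 - δ) * v) / (Real.pi * v) := by
        rw [le_div_iff₀ hπv]
        calc (4 - 2 * Real.sqrt 2) * a / π * (Real.pi * v)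
            = (4 - 2 * Real.sqrt 2) * (c * (1 - δ) * v) := by
              rw [hadef]; field_simp; try ring
          _ ≤ 2 * (c * (1 - δ) * v) := by
              nlinarith [mul_nonneg (mul_nonneg hc0.le (by linarith : (0:ℝ) ≤ 1 - δ)) hv0.le]
          _ = 2 / π * (Real.pi * c * (1 - δ) * v) := by field_simp; try ring
          _ ≤ Real.sin (Real.pi * c * (1 - δ) * v) := hsin
      have := mul_le_mul_of_nonneg_right hdiv (Real.rpow_nonneg (by linarith : (0:ℝ) ≤ 1 - v) L)
      simpa [hfdef] using this
    have hg2int : IntervalIntegrable (fun v => (4 - 2 * Real.sqrt 2) * a / π * (1 - v) ^ L)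
        volume T1 T2 := (continuous_const.mul hpc).intervalIntegrable _ _
    have hle := intervalIntegral.integral_mono_on hT12 hg2int
      (hIbnd T1 T2 hT1p.le hT12 hT21) hpoint
    rwa [intervalIntegral.integral_const_mul, hPint T1 T2 hT1p.le hT21] at hle
  -- segment 3
  have hseg3 : 0 ≤ ∫ v in T2..Tc, f v := by
    apply intervalIntegral.integral_nonneg hT2c
    intro v hv
    have hv0 : 0 < v := lt_of_lt_of_le hT2p hv.1
    have hvT : v ≤ Tc := hv.2
    have hπv : 0 < Real.pi * v := by positivity
    have hcv : c * v ≤ 1 := by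
      calc c * v ≤ c * Tc := by nlinarith
        _ = 1 := by rw [hTc]; field_simp; try ring
    have hX0 : 0 ≤ Real.pi * c * (1 - δ) * v :=
      mul_nonneg (mul_nonneg (mul_nonneg hπ.le hc0.le) (by linarith)) hv0.le
    have hXpi : Real.pi * c * (1 - δ) * v ≤ π := by
      calc Real.pi * c * (1 - δ) * v ≤ Real.pi * (c * v) := by
            nlinarith [mul_nonneg (mul_nonneg (mul_nonneg hπ.le hc0.le) hv0.le) hδ0]
        _ ≤ Real.pi * 1 := mul_le_mul_of_nonneg_left hcv hπ.le
        _ = π := by ring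
    have hsin := Real.sin_nonneg_of_nonneg_of_le_pi hX0 hXpi
    have hv1 : v ≤ 1 := le_trans hvT hTc1
    simp only [hfdef]
    exact mul_nonneg (div_nonneg hsin hπv.le) (Real.rpow_nonneg (by linarith) L)
  -- segment 4
  set r : ℝ → ℝ := fun v => Real.exp (-(L * v)) / v with hrdef
  have hrint : IntegrableOn r (Ioi Tc) := by
    have hexp : IntegrableOn (fun v : ℝ => Real.exp (-(L * v))) (Ioi Tc) := by
      simpa [neg_mul] using exp_neg_integrableOn_Ioi Tc hL0
    apply Integrable.mono' (hexp.const_mul c)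
    · exact ((Real.measurable_exp.comp (measurable_const.mul measurable_id).neg).div
        measurable_id).aestronglyMeasurable
    · rw [ae_restrict_iff' measurableSet_Ioi]
      refine ae_of_all _ fun v hv => ?_
      have hv0 : 0 < v := lt_trans hTcpos hv
      have hcv : 1 ≤ c * v := by
        rw [hTc] at hv
        have := (div_lt_iff₀ hc0).mp hv
        nlinarith
      simp only [hrdef, Real.norm_eq_abs]
      rw [abs_of_nonneg (by positivity), div_le_iff₀ hv0]
      nlinarith [mul_le_mul_of_nonneg_left hcv (Real.exp_pos (-(L * v))).le]
  have hsub : ∫ v in Ioi Tc, r v = ∫ u in Ioi (L / c), Real.exp (-u) / u := by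
    have h := integral_comp_mul_left_Ioi (fun u => Real.exp (-u) / u) Tc hL0
    rw [smul_eq_mul] at h
    have h2 : (∫ x in Ioi Tc, Real.exp (-(L * x)) / (L * x))
        = L⁻¹ * ∫ v in Ioi Tc, r v := by
      rw [← MeasureTheory.integral_const_mul]
      apply setIntegral_congr_fun measurableSet_Ioi
      intro v hv
      have hv0 : 0 < v := lt_trans hTcpos hv
      simp only [hrdef]
      field_simp
    have h3 : L * Tc = L / c := by rw [hTc]; exact mul_one_div L c
    rw [h2, h3] at h
    exact mul_left_cancel₀ (inv_ne_zero hL0.ne') h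
  have hseg4 : -(1 / π) * (∫ u in Ioi (L / c), Real.exp (-u) / u) ≤ ∫ v in Tc..1, f v := by
    have hpt : ∀ v ∈ Icc Tc 1, -(Real.exp (-(L * v)) / (Real.pi * v)) ≤ f v := by
      intro v hv
      have hv0 : 0 < v := lt_of_lt_of_le hTcpos hv.1
      have hv1 : v ≤ 1 := hv.2
      have hπv : 0 < Real.pi * v := by positivity
      have hp1 : (1 - v) ^ L ≤ Real.exp (-(L * v)) := by
        have h1 : 1 - v ≤ Real.exp (-v) := by nlinarith [Real.add_one_le_exp (-v)]
        calc (1 - v) ^ L ≤ Real.exp (-v) ^ L :=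
              Real.rpow_le_rpow (by linarith) h1 hL0.le
          _ = Real.exp (-v * L) := (Real.exp_mul _ _).symm
          _ = Real.exp (-(L * v)) := by ring_nf
      have hp0 : 0 ≤ (1 - v) ^ L := Real.rpow_nonneg (by linarith) L
      have hsin : -1 ≤ Real.sin (Real.pi * c * (1 - δ) * v) := Real.neg_one_le_sin _
      simp only [hfdef]
      calc -(Real.exp (-(L * v)) / (Real.pi * v))
          ≤ -((1 - v) ^ L / (Real.pi * v)) := neg_le_neg (by gcongr)
        _ = -1 / (Real.pi * v) * (1 - v) ^ L := by ring
        _ ≤ Real.sin (Real.pi * c * (1 - δ) * v) / (Real.pi * v) * (1 - v) ^ L :=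
            mul_le_mul_of_nonneg_right (by gcongr) hp0
    have hg4int : IntervalIntegrable (fun v => -(Real.exp (-(L * v)) / (Real.pi * v)))
        volume Tc 1 := by
      apply ContinuousOn.intervalIntegrable
      rw [uIcc_of_le hTc1]
      apply ContinuousOn.neg
      apply ContinuousOn.div
      · exact (Real.continuous_exp.comp ((continuous_const.mul continuous_id).neg)).continuousOn
      · exact (continuous_const.mul continuous_id).continuousOn
      · intro x hx
        have hx0 : 0 < x := lt_of_lt_of_le hTcpos hx.1
        positivity
    have step1 := intervalIntegral.integral_mono_on hTc1 hg4int
      (hIbnd Tc 1 hTcpos.le hTc1 le_rfl) hpt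
    have step2 : (∫ v in Tc..(1:ℝ), -(Real.exp (-(L * v)) / (Real.pi * v)))
        = -(1 / π) * ∫ v in Tc..(1:ℝ), r v := by
      rw [← intervalIntegral.integral_const_mul]
      apply intervalIntegral.integral_congr
      intro v hv
      simp only [hrdef]
      ring
    have step3 : (∫ v in Tc..(1:ℝ), r v) ≤ ∫ v in Ioi Tc, r v := by
      rw [intervalIntegral.integral_of_le hTc1]
      apply setIntegral_mono_set hrint
      · refine (ae_restrict_iff' measurableSet_Ioi).2 (ae_of_all _ fun v hv => ?_)
        have hv0 : 0 < v := lt_trans hTcpos hv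
        simp only [hrdef]
        positivity
      · exact HasSubset.Subset.eventuallyLE Ioc_subset_Ioi_self
    calc -(1 / π) * (∫ u in Ioi (L / c), Real.exp (-u) / u)
        = -(1 / π) * ∫ v in Ioi Tc, r v := by rw [hsub]
      _ ≤ -(1 / π) * ∫ v in Tc..(1:ℝ), r v :=
          mul_le_mul_of_nonpos_left step3 (by simp; positivity)
      _ = ∫ v in Tc..(1:ℝ), -(Real.exp (-(L * v)) / (Real.pi * v)) := step2.symm
      _ ≤ ∫ v in Tc..1, f v := step1
  -- split the integral
  have e1 := intervalIntegral.integral_add_adjacent_intervals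
    (hIbnd 0 T1 le_rfl hT1p.le hT11) (hIbnd T1 T2 hT1p.le hT12 hT21)
  have e2 := intervalIntegral.integral_add_adjacent_intervals
    (hIbnd 0 T2 le_rfl hT2p.le hT21) (hIbnd T2 Tc hT2p.le hT2c hTc1)
  have e3 := intervalIntegral.integral_add_adjacent_intervals
    (hIbnd 0 Tc le_rfl hTcpos.le hTc1) (hIbnd Tc 1 hTcpos.le hTc1 le_rfl)
  -- reduce goal
  refine sub_le_sub_left (mul_le_mul_of_nonneg_left ?_ (by linarith : (0:ℝ) ≤ 2 * ℓ)) c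
  -- main algebraic comparison
  have hmain : 2 * c * (1 - δ) / (π * k) *
      (Real.sqrt 2 - (2 * Real.sqrt 2 - 2) * Real.exp (-k / (4 * c))
        - (2 - Real.sqrt 2) * Real.exp (-k / (2 * c)))
      ≤ 2 * Real.sqrt 2 * a / π * ((1 - (1 - T1) ^ k) / k)
        + (4 - 2 * Real.sqrt 2) * a / π * (((1 - T1) ^ k - (1 - T2) ^ k) / k) := by
    have hd : 2 * Real.sqrt 2 * a / π * ((1 - (1 - T1) ^ k) / k)
        + (4 - 2 * Real.sqrt 2) * a / π * (((1 - T1) ^ k - (1 - T2) ^ k) / k)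
        - 2 * c * (1 - δ) / (π * k) *
          (Real.sqrt 2 - (2 * Real.sqrt 2 - 2) * Real.exp (-k / (4 * c))
            - (2 - Real.sqrt 2) * Real.exp (-k / (2 * c)))
        = a / (π * k) *
          ((4 * Real.sqrt 2 - 4) * (Real.exp (-k / (4 * c)) - (1 - T1) ^ k)
            + (4 - 2 * Real.sqrt 2) * (Real.exp (-k / (2 * c)) - (1 - T2) ^ k)) := by
      rw [hadef]
      field_simp
      ring
    have h0 : 0 ≤ a / (π * k) *
        ((4 * Real.sqrt 2 - 4) * (Real.exp (-k / (4 * c)) - (1 - T1) ^ k)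
          + (4 - 2 * Real.sqrt 2) * (Real.exp (-k / (2 * c)) - (1 - T2) ^ k)) := by
      exact mul_nonneg (div_nonneg ha0.le (mul_nonneg hπ.le hk0.le))
        (add_nonneg
          (mul_nonneg (by linarith : (0:ℝ) ≤ 4 * Real.sqrt 2 - 4) (sub_nonneg.mpr hA1E))
          (mul_nonneg (by linarith : (0:ℝ) ≤ 4 - 2 * Real.sqrt 2) (sub_nonneg.mpr hA2E)))
    rw [← sub_nonneg, hd]
    exact h0
  linarith [hseg1, hseg2, hseg3, hseg4, hmain, e1, e2, e3]
end
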